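/- Let a, b, c be nonnegative reals and A ∈ [0, π] be such that cosh a = cosh b · cosh c − sinh b · sinh c · cos A, and assume b ≤ 1/4 and c ≥ 1/2. Let ā ≥ 0 be defined by ā² = b² + c² − 2 b c cos A. Then a² ≤ (1 + 2 b²) ā². -/

import Mathlib

private lemma hd_mono {f f' : ℝ → ℝ} (hf : ∀ x, HasDerivAt f (f' x) x)
    (h0 : f 0 = 0) (hnn : ∀ x, 0 < x → 0 ≤ f' x) {x : ℝ} (hx : 0 ≤ x) : 0 ≤ f x := by
  have mono : MonotoneOn f (Set.Ici (0:ℝ)) := by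
    apply monotoneOn_of_deriv_nonneg (convex_Ici 0)
    · exact fun y _ => (hf y).continuousAt.continuousWithinAt
    · exact fun y _ => (hf y).differentiableAt.differentiableWithinAt
    · intro y hy
      rw [interior_Ici, Set.mem_Ioi] at hy
      rw [(hf y).deriv]
      exact hnn y hy
  have h := mono Set.self_mem_Ici (Set.mem_Ici.mpr hx) hx
  rwa [h0] at h

private lemma hd_aux1 {x : ℝ} (hx : 0 ≤ x) : Real.sinh x ≤ x * Real.cosh x := by
  have h := hd_mono (f := fun t => t * Real.cosh t - Real.sinh t)
      (f' := fun t => t * Real.sinh t)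
      (fun y => by
        have h := ((hasDerivAt_id y).mul (Real.hasDerivAt_cosh y)).sub (Real.hasDerivAt_sinh y)
        convert h using 1
        · rfl
        · rfl
        · rfl
        simp [id])
      (by simp) (fun y hy => mul_nonneg hy.le (Real.sinh_nonneg_iff.mpr hy.le)) hx
  simpa [sub_nonneg] using h

-- cosh x - 1 ≤ x^2/2 * cosh x
private lemma hd_aux2 {x : ℝ} (hx : 0 ≤ x) : Real.cosh x - 1 ≤ x^2/2 * Real.cosh x := by
  have h2 : Real.cosh (2*(x/2)) = Real.cosh (x/2)^2 + Real.sinh (x/2)^2 := Real.cosh_two_mul _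
  rw [show 2*(x/2) = x by ring] at h2
  have h3 : Real.cosh (x/2)^2 = Real.sinh (x/2)^2 + 1 := Real.cosh_sq _
  have h4 : Real.sinh (x/2) ≤ (x/2) * Real.cosh (x/2) := hd_aux1 (by linarith)
  have h5 : 0 ≤ Real.sinh (x/2) := Real.sinh_nonneg_iff.mpr (by linarith)
  have h6 : Real.sinh (x/2)^2 ≤ ((x/2) * Real.cosh (x/2))^2 := by
    have := mul_le_mul h4 h4 h5 (by positivity)
    nlinarith
  have h7 : (1:ℝ) ≤ Real.cosh x := Real.one_le_cosh x
  nlinarith [sq_nonneg x]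

-- sinh x ≤ x + x^3/6 * cosh x
private lemma hd_aux3 {x : ℝ} (hx : 0 ≤ x) : Real.sinh x ≤ x + x^3/6 * Real.cosh x := by
  have h := hd_mono (f := fun t => t + t^3/6 * Real.cosh t - Real.sinh t)
      (f' := fun t => 1 + t^2/2 * Real.cosh t + t^3/6 * Real.sinh t - Real.cosh t)
      (fun y => by
        have h := ((hasDerivAt_id y).add
          (((hasDerivAt_pow 3 y).div_const 6).mul (Real.hasDerivAt_cosh y))).sub
          (Real.hasDerivAt_sinh y)
        convert h using 1
        · rfl
        · rfl
        · rfl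
        simp [id]; ring)
      (by simp) (fun y hy => by
        have := hd_aux2 hy.le
        have h5 : 0 ≤ Real.sinh y := Real.sinh_nonneg_iff.mpr hy.le
        nlinarith [pow_nonneg hy.le 3]) hx
  simpa [sub_nonneg] using h

-- 3 x cosh x ≤ (3 + x^2) sinh x
private lemma hd_aux4 {x : ℝ} (hx : 0 ≤ x) : 3*x*Real.cosh x ≤ (3+x^2) * Real.sinh x := by
  have h := hd_mono (f := fun t => (3+t^2) * Real.sinh t - 3*(t*Real.cosh t))
      (f' := fun t => t^2 * Real.cosh t - t * Real.sinh t)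
      (fun y => by
        have h := (((hasDerivAt_pow 2 y).const_add 3).mul (Real.hasDerivAt_sinh y)).sub
          (((hasDerivAt_id y).mul (Real.hasDerivAt_cosh y)).const_mul 3)
        convert h using 1
        · rfl
        · rfl
        · rfl
        simp [id]; ring)
      (by simp) (fun y hy => by
        show (0:ℝ) ≤ y^2 * Real.cosh y - y * Real.sinh y
        have h1 := hd_aux1 hy.le
        nlinarith) hx
  have h' : (0:ℝ) ≤ (3+x^2) * Real.sinh x - 3*(x*Real.cosh x) := h
  linarith

-- monotonicity of sinh t / t : y sinh x ≤ x sinh y for 0 < x ≤ y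
private lemma hd_auxE {x y : ℝ} (hx : 0 < x) (hxy : x ≤ y) :
    y * Real.sinh x ≤ x * Real.sinh y := by
  have h1 : Real.sinh y = Real.sinh x * Real.cosh (y-x) + Real.cosh x * Real.sinh (y-x) := by
    have := Real.sinh_add x (y-x)
    rw [show x + (y-x) = y by ring] at this
    exact this
  have h2 : (1:ℝ) ≤ Real.cosh (y-x) := Real.one_le_cosh _
  have h3 : y - x ≤ Real.sinh (y-x) := Real.self_le_sinh_iff.mpr (by linarith)
  have h4 : 0 ≤ Real.sinh x := Real.sinh_nonneg_iff.mpr hx.le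
  have h5 := hd_aux1 hx.le
  nlinarith [mul_nonneg (mul_nonneg hx.le h4) (sub_nonneg.mpr h2),
    mul_nonneg (sub_nonneg.mpr h5) (by linarith : (0:ℝ) ≤ Real.sinh (y-x)),
    mul_nonneg h4 (sub_nonneg.mpr h3)]

private lemma hd_cosh_diff (x y : ℝ) :
    Real.cosh y - Real.cosh x = 2 * Real.sinh ((y+x)/2) * Real.sinh ((y-x)/2) := by
  have h1 := Real.cosh_add ((y+x)/2) ((y-x)/2)
  have h2 := Real.cosh_sub ((y+x)/2) ((y-x)/2)
  rw [show (y+x)/2 + (y-x)/2 = y by ring] at h1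
  rw [show (y+x)/2 - (y-x)/2 = x by ring] at h2
  linarith

-- tangent bound: sinh x (y²−x²) ≤ 2x (cosh y − cosh x), for 0 < x ≤ y
private lemma hd_tangent {x y : ℝ} (hx : 0 < x) (hxy : x ≤ y) :
    Real.sinh x * (y^2 - x^2) ≤ 2*x*(Real.cosh y - Real.cosh x) := by
  have hd := hd_cosh_diff x y
  have hp : x ≤ (y+x)/2 := by linarith
  have hq : 0 ≤ (y-x)/2 := by linarith
  have hE := hd_auxE hx hp
  have hsq : 0 ≤ Real.sinh ((y-x)/2) := Real.sinh_nonneg_iff.mpr hq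
  have hq2 : (y-x)/2 ≤ Real.sinh ((y-x)/2) := Real.self_le_sinh_iff.mpr hq
  have hsx : 0 ≤ Real.sinh x := Real.sinh_nonneg_iff.mpr hx.le
  nlinarith [mul_nonneg hsq (sub_nonneg.mpr hE),
    mul_nonneg (mul_nonneg (by linarith : (0:ℝ) ≤ (y+x)/2) hsx) (sub_nonneg.mpr hq2)]

-- (y−x) sinh x ≤ cosh y − cosh x, for 0 ≤ x ≤ y
private lemma hd_G {x y : ℝ} (hx : 0 ≤ x) (hxy : x ≤ y) :
    (y - x) * Real.sinh x ≤ Real.cosh y - Real.cosh x := by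
  have hd := hd_cosh_diff x y
  have hp : Real.sinh x ≤ Real.sinh ((y+x)/2) := Real.sinh_le_sinh.mpr (by linarith)
  have hq : 0 ≤ (y-x)/2 := by linarith
  have hq2 : (y-x)/2 ≤ Real.sinh ((y-x)/2) := Real.self_le_sinh_iff.mpr hq
  have hsq : 0 ≤ Real.sinh ((y-x)/2) := Real.sinh_nonneg_iff.mpr hq
  have hsx : 0 ≤ Real.sinh x := Real.sinh_nonneg_iff.mpr hx
  nlinarith [mul_nonneg hsq (sub_nonneg.mpr hp), mul_nonneg hsx (sub_nonneg.mpr hq2)]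
private lemma hd_sq_le {x y : ℝ} (hx : 0 ≤ x) (hy : 0 ≤ y) (h : x^2 ≤ y^2) : x ≤ y := by
  have h1 : Real.sqrt (x^2) ≤ Real.sqrt (y^2) := Real.sqrt_le_sqrt h
  rwa [Real.sqrt_sq hx, Real.sqrt_sq hy] at h1

private lemma hd_u {S C2 R u : ℝ} (h : 2*S ≤ 2*C2 + R) (hu0 : 0 ≤ u) (hu2 : u ≤ 2)
    (hR : 0 ≤ R) : S*u ≤ C2*u + R := by
  rcases le_total S C2 with hsc | hsc
  · have h1 := mul_le_mul_of_nonneg_right hsc hu0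
    linarith
  · have h2 : (S - C2)*u ≤ (S - C2)*2 := mul_le_mul_of_nonneg_left hu2 (by linarith)
    nlinarith

private lemma hd_kappa1 {b : ℝ} (hb : 0 ≤ b) (hb4 : b ≤ 1/4) :
    1 ≤ Real.sqrt (1+2*b^2) ∧ Real.sqrt (1+2*b^2) ≤ 13/12 ∧
      (24/25)*b^2 ≤ Real.sqrt (1+2*b^2) - 1 := by
  have hnn : 0 ≤ Real.sqrt (1+2*b^2) := Real.sqrt_nonneg _
  have hsq : (Real.sqrt (1+2*b^2))^2 = 1+2*b^2 := Real.sq_sqrt (by positivity)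
  have h1 : 1 ≤ Real.sqrt (1+2*b^2) := by nlinarith
  have h2 : Real.sqrt (1+2*b^2) ≤ 13/12 := by nlinarith
  exact ⟨h1, h2, by nlinarith⟩

-- numeric bounds on region b ∈ [0,1/4]
private lemma hd_f3 {b : ℝ} (hb : 0 ≤ b) (hb4 : b ≤ 1/4) :
    Real.sinh (2*b) ≤ 2*b + (32/21)*b^3 := by
  have h2b : (0:ℝ) ≤ 2*b := by linarith
  have hc : Real.cosh (2*b) ≤ 8/7 := by
    have h := hd_aux2 h2b
    have hcc : (2*b)^2/2*Real.cosh (2*b) ≤ (1/8)*Real.cosh (2*b) :=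
      mul_le_mul_of_nonneg_right (by nlinarith) (Real.cosh_pos (x := 2*b)).le
    linarith [Real.one_le_cosh (2*b)]
  have h := hd_aux3 h2b
  nlinarith [pow_nonneg hb 3]

private lemma hd_f5 {b : ℝ} (hb : 0 ≤ b) (hb4 : b ≤ 1/4) :
    (Real.sinh b)^2 ≤ b^2 + (7/20)*b^4 := by
  have hc : Real.cosh b ≤ 32/31 := by
    have h := hd_aux2 hb
    have hcc : b^2/2*Real.cosh b ≤ (1/32)*Real.cosh b :=
      mul_le_mul_of_nonneg_right (by nlinarith) (Real.cosh_pos (x := b)).le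
    linarith [Real.one_le_cosh b]
  have f4 : Real.sinh b ≤ b + (16/93)*b^3 := by
    have h := hd_aux3 hb
    nlinarith [pow_nonneg hb 3]
  have hsb : 0 ≤ Real.sinh b := Real.sinh_nonneg_iff.mpr hb
  have h := mul_le_mul f4 f4 hsb (by positivity)
  have hb2 : b^2 ≤ 1/16 := by nlinarith
  have hb6 : b^6 ≤ (1/16)*b^4 := by
    have h6 := mul_le_mul_of_nonneg_left hb2 (pow_nonneg hb 4)
    nlinarith [h6]
  nlinarith

private lemma hd_Q {b d : ℝ} (hb : 0 ≤ b) (hb4 : b ≤ 1/4) (hd4 : 1/4 ≤ d) :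
    2*(b^2+(7/20)*b^4)*(1+d^2/3) + (2*b+(32/21)*b^3)*d
      ≤ 2*(1+2*b^2)*b*(b+d) + (24/25)*b^2*d^2 := by
  have h0 : (0:ℝ) ≤ 22/75 - (7/30)*b^2 := by nlinarith
  nlinarith [mul_nonneg (mul_nonneg (sq_nonneg b) (sq_nonneg d)) h0,
    pow_nonneg hb 4,
    mul_nonneg (mul_nonneg (mul_nonneg hb hb) hb) (by linarith : (0:ℝ) ≤ d)]

-- KEY polynomial inequality
private lemma hd_key {b d : ℝ} (hb : 0 ≤ b) (hb4 : b ≤ 1/4) (hd4 : 1/4 ≤ d) :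
    2*d*(Real.sinh b * Real.sinh (b+d))
      ≤ 2*(1+2*b^2)*b*(b+d)*Real.sinh d + (24/25)*b^2*d^2*Real.sinh d := by
  have hdpos : 0 < d := by linarith
  have hsd : 0 < Real.sinh d := Real.sinh_pos_iff.mpr hdpos
  have e1 : Real.sinh (b+d) = Real.sinh b * Real.cosh d + Real.cosh b * Real.sinh d :=
    Real.sinh_add b d
  have f6 : d*Real.cosh d ≤ (1 + d^2/3)*Real.sinh d := by
    have h := hd_aux4 hdpos.le
    linarith
  have P1 := mul_le_mul_of_nonneg_left f6 (by positivity : (0:ℝ) ≤ 2*(Real.sinh b)^2)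
  have P2 := mul_le_mul_of_nonneg_right (hd_f5 hb hb4)
    (by nlinarith [sq_nonneg d] : (0:ℝ) ≤ 2*((1+d^2/3)*Real.sinh d))
  have f3' : 2*Real.sinh b*Real.cosh b ≤ 2*b + (32/21)*b^3 := by
    have := hd_f3 hb hb4
    rwa [Real.sinh_two_mul] at this
  have P3 := mul_le_mul_of_nonneg_right f3' (mul_nonneg hdpos.le hsd.le)
  have P4 := mul_le_mul_of_nonneg_right (hd_Q hb hb4 hd4) hsd.le
  rw [e1]
  nlinarith [P1, P2, P3, P4]

-- the main chain
set_option maxHeartbeats 1000000 in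
private lemma hd_chain {b d abar u : ℝ} (hb : 0 < b) (hb4 : b ≤ 1/4) (hd4 : 1/4 ≤ d)
    (hu0 : 0 ≤ u) (hu2 : u ≤ 2) (habar : 0 ≤ abar)
    (habar_d : abar^2 = d^2 + 2*b*(b+d)*u) :
    Real.cosh d + Real.sinh b * Real.sinh (b+d) * u
      ≤ Real.cosh (Real.sqrt (1+2*b^2) * abar) := by
  set κ : ℝ := Real.sqrt (1+2*b^2) with hκ_def
  obtain ⟨hκ1, hκ13, hκm1⟩ := hd_kappa1 hb.le hb4
  have hκsq : κ^2 = 1+2*b^2 := Real.sq_sqrt (by positivity)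
  have hdpos : 0 < d := by linarith
  have hsd : 0 < Real.sinh d := Real.sinh_pos_iff.mpr hdpos
  have hWnn : 0 ≤ 2*b*(b+d)*u := by
    have hbd : (0:ℝ) ≤ b + d := by linarith
    exact mul_nonneg (mul_nonneg (by linarith) hbd) hu0
  have habar_ge : d ≤ abar := by
    refine hd_sq_le hdpos.le habar ?_
    nlinarith
  -- tangent estimate at κ d
  have hκd : 0 < κ * d := by positivity
  have hκda : κ*d ≤ κ*abar := mul_le_mul_of_nonneg_left habar_ge (by linarith)
  have hF := hd_tangent hκd hκda
  have hsqeq : (κ*abar)^2 - (κ*d)^2 = (1+2*b^2) * (2*b*(b+d)*u) := by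
    rw [mul_pow, mul_pow, hκsq, habar_d]; ring
  rw [hsqeq] at hF
  -- sinh(κ d) ≥ κ sinh d
  have hE' := hd_auxE hdpos (by nlinarith : d ≤ κ*d)
  have step1 : κ * Real.sinh d ≤ Real.sinh (κ*d) :=
    le_of_mul_le_mul_left (by nlinarith [hE'] :
      d * (κ * Real.sinh d) ≤ d * Real.sinh (κ*d)) hdpos
  -- step3: (1+2b²)·W·sinh d ≤ 2d(cosh(κ abar) − cosh(κ d))
  have step2' := mul_le_mul_of_nonneg_right step1
    (mul_nonneg (by positivity : (0:ℝ) ≤ (1+2*b^2)) hWnn)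
  have step3 : (1+2*b^2)*(2*b*(b+d)*u)*Real.sinh d
      ≤ 2*d*(Real.cosh (κ*abar) - Real.cosh (κ*d)) := by
    have hh : κ * ((1+2*b^2)*(2*b*(b+d)*u)*Real.sinh d)
        ≤ κ * (2*d*(Real.cosh (κ*abar) - Real.cosh (κ*d))) := by nlinarith [step2', hF]
    exact le_of_mul_le_mul_left hh (by linarith)
  -- step4: cosh(κ d) reserve
  have hG := hd_G hdpos.le (by nlinarith : d ≤ κ*d)
  have step4 : Real.cosh d + (24/25)*b^2*d*Real.sinh d ≤ Real.cosh (κ*d) := by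
    have h1 : (24/25)*b^2*d ≤ (κ-1)*d := mul_le_mul_of_nonneg_right hκm1 hdpos.le
    have h2 : (24/25)*b^2*d*Real.sinh d ≤ (κ-1)*d*Real.sinh d :=
      mul_le_mul_of_nonneg_right h1 hsd.le
    nlinarith [hG]
  -- linear-in-u step via the key inequality
  have hstep : (d*(Real.sinh b * Real.sinh (b+d)))*u
      ≤ ((1+2*b^2)*b*(b+d)*Real.sinh d)*u + (24/25)*b^2*d^2*Real.sinh d := by
    refine hd_u ?_ hu0 hu2 (by positivity)
    have := hd_key hb.le hb4 hd4
    linarith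
  -- assemble, multiplied by 2d
  have step4' := mul_le_mul_of_nonneg_left step4 (by linarith : (0:ℝ) ≤ 2*d)
  have final2 : (2*d) * (Real.cosh d + Real.sinh b * Real.sinh (b+d) * u)
      ≤ (2*d) * Real.cosh (κ*abar) := by nlinarith [step3, step4', hstep]
  exact le_of_mul_le_mul_left final2 (by linarith)

theorem hyperbolic_distortion_large_c
    (a b c A : ℝ) (ha : 0 ≤ a) (hb : 0 ≤ b) (hc : 0 ≤ c)
    (hA : A ∈ Set.Icc (0 : ℝ) Real.pi)
    (hlaw : Real.cosh a = Real.cosh b * Real.cosh c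
        - Real.sinh b * Real.sinh c * Real.cos A)
    (hb4 : b ≤ 1 / 4) (hc2 : 1 / 2 ≤ c)
    (abar : ℝ) (habar : 0 ≤ abar)
    (habar2 : abar ^ 2 = b ^ 2 + c ^ 2 - 2 * b * c * Real.cos A) :
    a ^ 2 ≤ (1 + 2 * b ^ 2) * abar ^ 2 := by
  by_cases hb0 : b = 0
  · subst hb0
    simp only [Real.cosh_zero, Real.sinh_zero, one_mul, zero_mul, zero_sub, neg_zero,
      sub_zero] at hlaw
    have h1 : |a| = |c| := le_antisymm (Real.cosh_le_cosh.1 hlaw.le) (Real.cosh_le_cosh.1 hlaw.ge)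
    rw [abs_of_nonneg ha, abs_of_nonneg hc] at h1
    have h2 : abar ^ 2 = c ^ 2 := by rw [habar2]; ring
    nlinarith [h2, h1]
  · have hbpos : 0 < b := lt_of_le_of_ne hb (Ne.symm hb0)
    have hd4 : 1/4 ≤ c - b := by linarith
    have hu0 : 0 ≤ 1 - Real.cos A := by nlinarith [Real.cos_le_one A]
    have hu2 : 1 - Real.cos A ≤ 2 := by nlinarith [Real.neg_one_le_cos A]
    have habar_d : abar^2 = (c-b)^2 + 2*b*(b+(c-b))*(1 - Real.cos A) := by
      rw [habar2]; ring
    have hchain := hd_chain hbpos hb4 hd4 hu0 hu2 habar habar_d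
    have hcosha : Real.cosh a = Real.cosh (c-b)
        + Real.sinh b * Real.sinh (b+(c-b)) * (1 - Real.cos A) := by
      rw [show b+(c-b) = c by ring, hlaw, Real.cosh_sub]; ring
    have target1 : Real.cosh a ≤ Real.cosh (Real.sqrt (1+2*b^2) * abar) := by
      rw [hcosha]; exact hchain
    have habs : |a| ≤ |Real.sqrt (1+2*b^2) * abar| := Real.cosh_le_cosh.1 target1
    have hκnn : 0 ≤ Real.sqrt (1+2*b^2) := Real.sqrt_nonneg _
    rw [abs_of_nonneg ha, abs_of_nonneg (by positivity)] at habs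
    have hfin : a^2 ≤ (Real.sqrt (1+2*b^2) * abar)^2 := by
      have := mul_le_mul habs habs ha (by positivity)
      nlinarith
    rwa [mul_pow, Real.sq_sqrt (by positivity : (0:ℝ) ≤ 1+2*b^2)] at hfin
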